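/- Let 𝒫 be a downward-closed family of subsets of {1,…,p} (U ⊆ V ∈ 𝒫 implies U ∈ 𝒫). Then in the maximization defining φ_𝒫(z,β) — maximize βᵀRβ + ∑_{T∈𝒫} βᵀA_Tβ / min{1, z(T)} over PSD matrices A_T supported on T and PSD R with ∑_T A_T + R = XᵀX + λI — there exists an optimal solution in which every A_T is a rank-one matrix. -/

import Mathlib

open Matrix BigOperators

section Helpers

variable {p : ℕ}

private lemma quad_vecMulVec (a b x y : Fin p → ℝ) :
    x ⬝ᵥ (vecMulVec a b).mulVec y = (x ⬝ᵥ a) * (b ⬝ᵥ y) := by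
  simp only [dotProduct, mulVec, vecMulVec_apply, Finset.sum_mul, Finset.mul_sum]
  rw [Finset.sum_comm]
  exact Finset.sum_congr rfl fun i _ => Finset.sum_congr rfl fun j _ => by ring

private lemma quad_add (P Q : Matrix (Fin p) (Fin p) ℝ) (x y : Fin p → ℝ) :
    x ⬝ᵥ (P + Q).mulVec y = x ⬝ᵥ P.mulVec y + x ⬝ᵥ Q.mulVec y := by
  rw [add_mulVec, dotProduct_add]

private lemma quad_sub (P Q : Matrix (Fin p) (Fin p) ℝ) (x y : Fin p → ℝ) :
    x ⬝ᵥ (P - Q).mulVec y = x ⬝ᵥ P.mulVec y - x ⬝ᵥ Q.mulVec y := by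
  rw [sub_mulVec, dotProduct_sub]

private lemma quad_sum {ι : Type*} (s : Finset ι) (P : ι → Matrix (Fin p) (Fin p) ℝ)
    (x y : Fin p → ℝ) :
    x ⬝ᵥ (∑ T ∈ s, P T).mulVec y = ∑ T ∈ s, x ⬝ᵥ (P T).mulVec y := by
  classical
  induction s using Finset.induction with
  | empty => simp
  | insert _ _ h ih => rw [Finset.sum_insert h, Finset.sum_insert h, quad_add, ih]

private lemma quad_symm {N : Matrix (Fin p) (Fin p) ℝ} (hN : N.IsHermitian) (x y : Fin p → ℝ) :
    x ⬝ᵥ N.mulVec y = y ⬝ᵥ N.mulVec x := by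
  rw [dotProduct_mulVec, ← mulVec_transpose, dotProduct_comm]
  congr 1
  rw [show Nᵀ = N from hN]

private lemma psd_nonneg {N : Matrix (Fin p) (Fin p) ℝ} (hN : N.PosSemidef) (x : Fin p → ℝ) :
    0 ≤ x ⬝ᵥ N.mulVec x := by
  simpa using hN.dotProduct_mulVec_nonneg x

private lemma psd_cs {N : Matrix (Fin p) (Fin p) ℝ} (hN : N.PosSemidef) (x y : Fin p → ℝ) :
    (x ⬝ᵥ N.mulVec y) ^ 2 ≤ (x ⬝ᵥ N.mulVec x) * (y ⬝ᵥ N.mulVec y) := by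
  have h : ∀ t : ℝ, 0 ≤ (y ⬝ᵥ N.mulVec y) * (t * t) + (2 * (x ⬝ᵥ N.mulVec y)) * t
      + (x ⬝ᵥ N.mulVec x) := by
    intro t
    have := psd_nonneg hN (x + t • y)
    have e1 : (x + t • y) ⬝ᵥ N.mulVec (x + t • y)
        = (y ⬝ᵥ N.mulVec y) * (t * t) + (2 * (x ⬝ᵥ N.mulVec y)) * t + (x ⬝ᵥ N.mulVec x) := by
      rw [mulVec_add, dotProduct_add, add_dotProduct, add_dotProduct, mulVec_smul,
        dotProduct_smul, dotProduct_smul, smul_dotProduct, smul_dotProduct,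
        quad_symm hN.1 y x]
      simp only [smul_eq_mul]; ring
    linarith [e1 ▸ this]
  have hd := discrim_le_zero h
  unfold discrim at hd
  nlinarith [hd]

private lemma quad_single (N : Matrix (Fin p) (Fin p) ℝ) (i j : Fin p) :
    (Pi.single i 1 : Fin p → ℝ) ⬝ᵥ N.mulVec (Pi.single j 1) = N i j := by
  rw [mulVec_single, single_dotProduct]; simp

private lemma psd_diag {N : Matrix (Fin p) (Fin p) ℝ} (hN : N.PosSemidef) (i : Fin p) :
    0 ≤ N i i := by
  simpa [quad_single] using psd_nonneg hN (Pi.single i 1)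

private lemma psd_entry {N : Matrix (Fin p) (Fin p) ℝ} (hN : N.PosSemidef) (i j : Fin p) :
    |N i j| ≤ (N i i + N j j) / 2 := by
  have hsym : N j i = N i j := by
    have := congrFun (congrFun hN.1 j) i
    simpa [conjTranspose_apply] using this.symm
  have h1 := psd_nonneg hN (Pi.single i 1 + Pi.single j 1)
  have h2 := psd_nonneg hN (Pi.single i 1 - Pi.single j 1)
  rw [mulVec_add, dotProduct_add, add_dotProduct, add_dotProduct, quad_single, quad_single,
    quad_single, quad_single] at h1
  rw [mulVec_sub, dotProduct_sub, sub_dotProduct, sub_dotProduct, quad_single, quad_single,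
    quad_single, quad_single] at h2
  rw [abs_le]
  constructor <;> linarith

private lemma vecMulVec_psd (c : Fin p → ℝ) : (vecMulVec c c).PosSemidef := by
  refine Matrix.PosSemidef.of_dotProduct_mulVec_nonneg ?_ ?_
  · ext i j
    simp [vecMulVec_apply, conjTranspose_apply, mul_comm]
  · intro x
    simp only [star_trivial]
    rw [quad_vecMulVec, dotProduct_comm]
    exact mul_self_nonneg _

private lemma psd_sum {ι : Type*} (s : Finset ι) (P : ι → Matrix (Fin p) (Fin p) ℝ)
    (h : ∀ T ∈ s, (P T).PosSemidef) : (∑ T ∈ s, P T).PosSemidef := by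
  classical
  induction s using Finset.induction with
  | empty => simpa using Matrix.PosSemidef.zero
  | insert _ _ hx ih =>
    rw [Finset.sum_insert hx]
    exact ((h _ (Finset.mem_insert_self _ _)).add
      (ih fun T hT => h T (Finset.mem_insert_of_mem hT)))

private lemma rankOne_extract {N : Matrix (Fin p) (Fin p) ℝ} (hN : N.PosSemidef)
    (β : Fin p → ℝ) :
    ∃ c : Fin p → ℝ, (N - vecMulVec c c).PosSemidef ∧
      β ⬝ᵥ (vecMulVec c c).mulVec β = β ⬝ᵥ N.mulVec β ∧
      ∀ i, (∀ j, N i j = 0) → c i = 0 := by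
  set q := β ⬝ᵥ N.mulVec β with hq
  have hq0 : 0 ≤ q := psd_nonneg hN β
  rcases eq_or_lt_of_le hq0 with h0 | hpos
  · have hv0 : vecMulVec (0 : Fin p → ℝ) (0 : Fin p → ℝ) = (0 : Matrix (Fin p) (Fin p) ℝ) := by
      ext i j; simp [vecMulVec_apply]
    refine ⟨0, ?_, ?_, fun i _ => rfl⟩
    · rw [hv0, sub_zero]; exact hN
    · rw [hv0]; simp only [zero_mulVec, dotProduct_zero]; exact h0
  · refine ⟨(Real.sqrt q)⁻¹ • N.mulVec β, ?_, ?_, ?_⟩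
    · refine Matrix.PosSemidef.of_dotProduct_mulVec_nonneg ?_ ?_
      · have h1 : (N - vecMulVec ((Real.sqrt q)⁻¹ • N.mulVec β) ((Real.sqrt q)⁻¹ • N.mulVec β))ᵀ
            = N - vecMulVec ((Real.sqrt q)⁻¹ • N.mulVec β) ((Real.sqrt q)⁻¹ • N.mulVec β) := by
          rw [transpose_sub, show Nᵀ = N from hN.1]
          congr 1
          ext i j; simp [vecMulVec_apply, mul_comm]; ring
        rw [IsHermitian, conjTranspose_eq_transpose_of_trivial]; exact h1
      · intro x
        simp only [star_trivial, sub_mulVec, dotProduct_sub]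
        rw [quad_vecMulVec]
        have hsq : Real.sqrt q * Real.sqrt q = q := Real.mul_self_sqrt hq0
        have hs : (0:ℝ) < Real.sqrt q := Real.sqrt_pos.mpr hpos
        have e1 : x ⬝ᵥ (Real.sqrt q)⁻¹ • N.mulVec β = (Real.sqrt q)⁻¹ * (x ⬝ᵥ N.mulVec β) := by
          rw [dotProduct_smul]; simp [smul_eq_mul]
        have e2 : ((Real.sqrt q)⁻¹ • N.mulVec β) ⬝ᵥ x = (Real.sqrt q)⁻¹ * (x ⬝ᵥ N.mulVec β) := by
          rw [smul_dotProduct]; simp [smul_eq_mul, dotProduct_comm]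
        rw [e1, e2]
        have hcs := psd_cs hN x β
        rw [← hq] at hcs
        have e3 : (Real.sqrt q)⁻¹ * (x ⬝ᵥ N *ᵥ β) * ((Real.sqrt q)⁻¹ * (x ⬝ᵥ N *ᵥ β))
            = (x ⬝ᵥ N *ᵥ β)^2 / (Real.sqrt q * Real.sqrt q) := by
          rw [div_eq_mul_inv, mul_inv]; ring
        rw [e3, hsq, sub_nonneg, div_le_iff₀ hpos]
        exact hcs
    · rw [quad_vecMulVec]
      have hsq : Real.sqrt q * Real.sqrt q = q := Real.mul_self_sqrt hq0
      have e1 : β ⬝ᵥ (Real.sqrt q)⁻¹ • N.mulVec β = (Real.sqrt q)⁻¹ * q := by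
        rw [dotProduct_smul]; simp [smul_eq_mul, hq]
      have e2 : ((Real.sqrt q)⁻¹ • N.mulVec β) ⬝ᵥ β = (Real.sqrt q)⁻¹ * q := by
        rw [smul_dotProduct]; simp [smul_eq_mul, dotProduct_comm, hq]
      rw [e1, e2]
      have e3 : (Real.sqrt q)⁻¹ * q * ((Real.sqrt q)⁻¹ * q)
          = (q * q) / (Real.sqrt q * Real.sqrt q) := by
        rw [div_eq_mul_inv, mul_inv]; ring
      rw [e3, hsq, mul_div_assoc, div_self (ne_of_gt hpos), mul_one]
    · intro i hi
      simp only [Pi.smul_apply, smul_eq_mul, mulVec, dotProduct]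
      have : ∀ j ∈ Finset.univ, N i j * β j = 0 := fun j _ => by rw [hi j, zero_mul]
      rw [Finset.sum_eq_zero this, mul_zero]

private lemma cont_quad (β : Fin p → ℝ) :
    Continuous (fun N : Matrix (Fin p) (Fin p) ℝ => β ⬝ᵥ N.mulVec β) := by
  simp only [dotProduct, mulVec]
  apply continuous_finset_sum
  intro i _
  apply Continuous.mul continuous_const
  apply continuous_finset_sum
  intro j _
  exact (continuous_id.matrix_elem i j).mul continuous_const

private lemma isClosed_psd : IsClosed {N : Matrix (Fin p) (Fin p) ℝ | N.PosSemidef} := by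
  have : {N : Matrix (Fin p) (Fin p) ℝ | N.PosSemidef}
      = (⋂ i, ⋂ j, {N : Matrix (Fin p) (Fin p) ℝ | N j i = N i j}) ∩
        ⋂ v : Fin p → ℝ, {N : Matrix (Fin p) (Fin p) ℝ | 0 ≤ v ⬝ᵥ N.mulVec v} := by
    ext N
    simp only [Set.mem_setOf_eq, Set.mem_inter_iff, Set.mem_iInter]
    constructor
    · intro h
      refine ⟨fun i j => ?_, fun v => by simpa using h.dotProduct_mulVec_nonneg v⟩
      have := congrFun (congrFun h.1 i) j
      simpa [conjTranspose_apply] using this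
    · intro ⟨h1, h2⟩
      refine Matrix.PosSemidef.of_dotProduct_mulVec_nonneg ?_ ?_
      · ext i j; simpa [conjTranspose_apply] using (h1 j i).symm
      · intro v; simpa using h2 v
  rw [this]
  apply IsClosed.inter
  · exact isClosed_iInter fun i => isClosed_iInter fun j =>
      isClosed_eq (continuous_id.matrix_elem j i)
        (continuous_id.matrix_elem i j)
  · exact isClosed_iInter fun v => isClosed_le continuous_const (cont_quad v)

end Helpers

/-- if Fam is downward closed, the maximization defining φ_Fam(z,β) admits an
optimal PSD decomposition ∑_{T∈Fam} A_T + R = XᵀX + λI in which every A_T is rank-one,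
i.e., A_T = c cᵀ for some vector c. -/
theorem stmt7 {n p : ℕ} (X : Matrix (Fin n) (Fin p) ℝ) (lam : ℝ) (hlam : 0 ≤ lam)
    (Fam : Finset (Finset (Fin p)))
    (hdc : ∀ V ∈ Fam, ∀ U ⊆ V, U ∈ Fam)
    (z β : Fin p → ℝ) (hz : ∀ i, 0 ≤ z i ∧ z i ≤ 1) :
    ∃ (A : Finset (Fin p) → Matrix (Fin p) (Fin p) ℝ)
      (R : Matrix (Fin p) (Fin p) ℝ),
      (∀ T ∈ Fam, (A T).PosSemidef) ∧
      (∀ T ∈ Fam, ∀ i j, (i ∉ T ∨ j ∉ T) → A T i j = 0) ∧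
      R.PosSemidef ∧
      ((∑ T ∈ Fam, A T) + R = Xᵀ * X + lam • 1) ∧
      (∀ T ∈ Fam, ∃ c : Fin p → ℝ, A T = Matrix.vecMulVec c c) ∧
      (∀ (A' : Finset (Fin p) → Matrix (Fin p) (Fin p) ℝ)
         (R' : Matrix (Fin p) (Fin p) ℝ),
        (∀ T ∈ Fam, (A' T).PosSemidef) →
        (∀ T ∈ Fam, ∀ i j, (i ∉ T ∨ j ∉ T) → A' T i j = 0) →
        R'.PosSemidef →
        ((∑ T ∈ Fam, A' T) + R' = Xᵀ * X + lam • 1) →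
        β ⬝ᵥ R'.mulVec β +
            ∑ T ∈ Fam, (β ⬝ᵥ (A' T).mulVec β) / min 1 (∑ i ∈ T, z i)
          ≤ β ⬝ᵥ R.mulVec β +
            ∑ T ∈ Fam, (β ⬝ᵥ (A T).mulVec β) / min 1 (∑ i ∈ T, z i)) := by
  classical
  set M : Matrix (Fin p) (Fin p) ℝ := Xᵀ * X + lam • 1 with hMdef
  have hXX : (Xᵀ * X).PosSemidef := by
    have h1 := Matrix.posSemidef_conjTranspose_mul_self X
    have : Xᴴ = Xᵀ := by ext i j; simp [conjTranspose_apply]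
    rwa [this] at h1
  have hsm : (lam • (1 : Matrix (Fin p) (Fin p) ℝ)).PosSemidef := by
    refine Matrix.PosSemidef.of_dotProduct_mulVec_nonneg ?_ ?_
    · rw [Matrix.IsHermitian, conjTranspose_smul, conjTranspose_one]
      simp
    · intro x
      rw [smul_mulVec, one_mulVec, dotProduct_smul]
      simp only [star_trivial, smul_eq_mul]
      exact mul_nonneg hlam (Finset.sum_nonneg fun i _ => mul_self_nonneg _)
  have hM : M.PosSemidef := hXX.add hsm
  -- the feasible set
  set S : Set ((Finset (Fin p) → Matrix (Fin p) (Fin p) ℝ) × Matrix (Fin p) (Fin p) ℝ) :=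
    {x | (∀ T ∈ Fam, (x.1 T).PosSemidef) ∧
      (∀ T ∈ Fam, ∀ i j, (i ∉ T ∨ j ∉ T) → x.1 T i j = 0) ∧
      x.2.PosSemidef ∧ ((∑ T ∈ Fam, x.1 T) + x.2 = M) ∧
      (∀ T, T ∉ Fam → x.1 T = 0)} with hSdef
  -- the objective
  set f : ((Finset (Fin p) → Matrix (Fin p) (Fin p) ℝ) × Matrix (Fin p) (Fin p) ℝ) → ℝ :=
    fun x => β ⬝ᵥ x.2.mulVec β +
      ∑ T ∈ Fam, (β ⬝ᵥ (x.1 T).mulVec β) / min 1 (∑ i ∈ T, z i) with hfdef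
  have hfc : Continuous f := by
    apply Continuous.add
    · exact (cont_quad β).comp continuous_snd
    · apply continuous_finset_sum
      intro T _
      exact ((cont_quad β).comp ((continuous_apply T).comp continuous_fst)).div_const _
  -- S is closed
  have hSclosed : IsClosed S := by
    have hrw : S = (⋂ T, {x : (Finset (Fin p) → Matrix (Fin p) (Fin p) ℝ) ×
          Matrix (Fin p) (Fin p) ℝ | T ∈ Fam → (x.1 T).PosSemidef}) ∩
        ((⋂ T, ⋂ i, ⋂ j, {x | T ∈ Fam → (i ∉ T ∨ j ∉ T) → x.1 T i j = 0}) ∩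
        ({x | x.2.PosSemidef} ∩
        ({x | (∑ T ∈ Fam, x.1 T) + x.2 = M} ∩
        (⋂ T, {x | T ∉ Fam → x.1 T = 0})))) := by
      ext x
      simp only [hSdef, Set.mem_setOf_eq, Set.mem_inter_iff, Set.mem_iInter]
      constructor
      · rintro ⟨a, b, cc, d, e⟩
        exact ⟨fun T hT => a T hT, fun T i j hT hij => b T hT i j hij, cc, d, e⟩
      · rintro ⟨a, b, cc, d, e⟩
        exact ⟨fun T hT => a T hT, fun T hT i j hij => b T i j hT hij, cc, d, e⟩
    rw [hrw]
    refine IsClosed.inter ?_ (IsClosed.inter ?_ (IsClosed.inter ?_ (IsClosed.inter ?_ ?_)))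
    · refine isClosed_iInter fun T => ?_
      by_cases hT : T ∈ Fam
      · simp only [hT, true_implies]
        have hcont : Continuous (fun x : (Finset (Fin p) → Matrix (Fin p) (Fin p) ℝ) ×
            Matrix (Fin p) (Fin p) ℝ => x.1 T) := (continuous_apply T).comp continuous_fst
        exact IsClosed.preimage hcont isClosed_psd
      · simp only [hT, false_implies, Set.setOf_true]
        exact isClosed_univ
    · refine isClosed_iInter fun T => isClosed_iInter fun i => isClosed_iInter fun j => ?_
      by_cases hc : T ∈ Fam ∧ (i ∉ T ∨ j ∉ T)
      · have : {x : (Finset (Fin p) → Matrix (Fin p) (Fin p) ℝ) ×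
            Matrix (Fin p) (Fin p) ℝ | T ∈ Fam → (i ∉ T ∨ j ∉ T) → x.1 T i j = 0}
            = {x | x.1 T i j = 0} := by
          ext x; simp [hc.1, hc.2]
        rw [this]
        have hcont : Continuous (fun x : (Finset (Fin p) → Matrix (Fin p) (Fin p) ℝ) ×
            Matrix (Fin p) (Fin p) ℝ => x.1 T i j) :=
          (continuous_apply j).comp ((continuous_apply i).comp
            ((continuous_apply T).comp continuous_fst))
        exact isClosed_eq hcont continuous_const
      · have : {x : (Finset (Fin p) → Matrix (Fin p) (Fin p) ℝ) ×
            Matrix (Fin p) (Fin p) ℝ | T ∈ Fam → (i ∉ T ∨ j ∉ T) → x.1 T i j = 0}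
            = Set.univ := by
          ext x
          simp only [Set.mem_setOf_eq, Set.mem_univ, iff_true]
          intro h1 h2; exact absurd ⟨h1, h2⟩ hc
        rw [this]; exact isClosed_univ
    · exact isClosed_psd.preimage continuous_snd
    · exact isClosed_eq
        ((continuous_finset_sum _ fun T _ => (continuous_apply T).comp continuous_fst).add
          continuous_snd) continuous_const
    · refine isClosed_iInter fun T => ?_
      by_cases hT : T ∈ Fam
      · have : {x : (Finset (Fin p) → Matrix (Fin p) (Fin p) ℝ) ×
            Matrix (Fin p) (Fin p) ℝ | T ∉ Fam → x.1 T = 0} = Set.univ := by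
          ext x
          simp only [Set.mem_setOf_eq, Set.mem_univ, iff_true]
          intro h; exact absurd hT h
        rw [this]; exact isClosed_univ
      · have : {x : (Finset (Fin p) → Matrix (Fin p) (Fin p) ℝ) ×
            Matrix (Fin p) (Fin p) ℝ | T ∉ Fam → x.1 T = 0} = {x | x.1 T = 0} := by
          ext x; simp [hT]
        rw [this]
        have hcont : Continuous (fun x : (Finset (Fin p) → Matrix (Fin p) (Fin p) ℝ) ×
            Matrix (Fin p) (Fin p) ℝ => x.1 T) := (continuous_apply T).comp continuous_fst
        exact isClosed_eq hcont continuous_const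
  -- S is contained in a compact box
  set B : ℝ := ∑ k, M k k with hBdef
  have hB0 : ∀ k, 0 ≤ M k k := fun k => psd_diag hM k
  have hdiagB : ∀ k, M k k ≤ B := fun k =>
    Finset.single_le_sum (fun k _ => hB0 k) (Finset.mem_univ k)
  have hentry : ∀ (N : Matrix (Fin p) (Fin p) ℝ), N.PosSemidef → (M - N).PosSemidef →
      ∀ i j, N i j ∈ Set.Icc (-B) B := by
    intro N hN hMN i j
    have h1 : N i i ≤ M i i := by
      have := psd_diag hMN i
      simp only [Matrix.sub_apply] at this
      linarith
    have h2 : N j j ≤ M j j := by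
      have := psd_diag hMN j
      simp only [Matrix.sub_apply] at this
      linarith
    have h3 := psd_entry hN i j
    have h4 := hdiagB i
    have h5 := hdiagB j
    rw [abs_le] at h3
    constructor <;> [linarith; linarith]
  have hSsub : S ⊆ (Set.univ.pi fun _ : Finset (Fin p) => Set.univ.pi fun _ : Fin p =>
      Set.univ.pi fun _ : Fin p => Set.Icc (-B) B) ×ˢ
      (Set.univ.pi fun _ : Fin p => Set.univ.pi fun _ : Fin p => Set.Icc (-B) B) := by
    rintro x ⟨hx1, hx2, hx3, hx4, hx5⟩
    constructor
    · intro T _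
      intro i _
      intro j _
      by_cases hT : T ∈ Fam
      · refine hentry (x.1 T) (hx1 T hT) ?_ i j
        have hMx : M - x.1 T = (∑ T' ∈ Fam.erase T, x.1 T') + x.2 := by
          rw [← hx4, ← Finset.sum_erase_add Fam _ hT]
          abel
        rw [hMx]
        exact (psd_sum _ _ fun T' hT' => hx1 T' (Finset.mem_of_mem_erase hT')).add hx3
      · rw [hx5 T hT]
        simp only [Matrix.zero_apply, Set.mem_Icc]
        constructor
        · simp only [neg_nonpos]
          exact Finset.sum_nonneg fun k _ => hB0 k
        · exact Finset.sum_nonneg fun k _ => hB0 k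
    · intro i _
      intro j _
      refine hentry x.2 hx3 ?_ i j
      have hMx : M - x.2 = ∑ T ∈ Fam, x.1 T := by
        rw [← hx4]; abel
      rw [hMx]
      exact psd_sum _ _ fun T hT => hx1 T hT
  have hbox : IsCompact ((Set.univ.pi fun _ : Finset (Fin p) => Set.univ.pi fun _ : Fin p =>
      Set.univ.pi fun _ : Fin p => Set.Icc (-B) B) ×ˢ
      (Set.univ.pi fun _ : Fin p => Set.univ.pi fun _ : Fin p => Set.Icc (-B) B)) :=
    (isCompact_univ_pi fun _ => isCompact_univ_pi fun _ =>
        isCompact_univ_pi fun _ => isCompact_Icc).prod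
      (isCompact_univ_pi fun _ => isCompact_univ_pi fun _ => isCompact_Icc)
  have hScompact : IsCompact S := hbox.of_isClosed_subset hSclosed hSsub
  have hSne : S.Nonempty := by
    refine ⟨(fun _ => 0, M), fun T _ => Matrix.PosSemidef.zero, fun T _ i j _ => rfl,
      hM, ?_, fun T _ => rfl⟩
    simp
  obtain ⟨xs, hxsS, hmax⟩ := hScompact.exists_isMaxOn hSne hfc.continuousOn
  obtain ⟨hx1, hx2, hx3, hx4, hx5⟩ := hxsS
  have hPSDall : ∀ T, (xs.1 T).PosSemidef := by
    intro T
    by_cases hT : T ∈ Fam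
    · exact hx1 T hT
    · rw [hx5 T hT]; exact Matrix.PosSemidef.zero
  choose c hc1 hc2 hc3 using fun T => rankOne_extract (hPSDall T) β
  refine ⟨fun T => vecMulVec (c T) (c T),
    xs.2 + ∑ T ∈ Fam, (xs.1 T - vecMulVec (c T) (c T)), ?_, ?_, ?_, ?_, ?_, ?_⟩
  · exact fun T _ => vecMulVec_psd (c T)
  · intro T hT i j hij
    show vecMulVec (c T) (c T) i j = 0
    rw [vecMulVec_apply]
    rcases hij with hi | hj
    · rw [hc3 T i fun j' => hx2 T hT i j' (Or.inl hi), zero_mul]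
    · rw [hc3 T j fun j' => hx2 T hT j j' (Or.inl hj), mul_zero]
  · exact hx3.add (psd_sum _ _ fun T _ => hc1 T)
  · have hbeta : ∑ T ∈ Fam, (fun T => vecMulVec (c T) (c T)) T
        = ∑ T ∈ Fam, vecMulVec (c T) (c T) := rfl
    rw [hbeta, Finset.sum_sub_distrib, ← hx4]
    abel
  · exact fun T _ => ⟨c T, rfl⟩
  · intro A' R' h1 h2 h3 h4
    have hyS : ((fun T => if T ∈ Fam then A' T else 0), R') ∈ S := by
      refine ⟨fun T hT => ?_, fun T hT i j hij => ?_, h3, ?_, fun T hT => if_neg hT⟩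
      · simp only [if_pos hT]; exact h1 T hT
      · simp only [if_pos hT]; exact h2 T hT i j hij
      · rw [Finset.sum_congr rfl fun T hT => if_pos hT]
        exact h4
    have hle : f ((fun T => if T ∈ Fam then A' T else 0), R') ≤ f xs := hmax hyS
    have heq1 : f ((fun T => if T ∈ Fam then A' T else 0), R')
        = β ⬝ᵥ R'.mulVec β + ∑ T ∈ Fam, (β ⬝ᵥ (A' T).mulVec β) / min 1 (∑ i ∈ T, z i) := by
      simp only [hfdef]
      congr 1
      exact Finset.sum_congr rfl fun T hT => by rw [if_pos hT]
    have heq2 : f xs = β ⬝ᵥ (xs.2 + ∑ T ∈ Fam, (xs.1 T - vecMulVec (c T) (c T))).mulVec β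
        + ∑ T ∈ Fam, (β ⬝ᵥ (vecMulVec (c T) (c T)).mulVec β) / min 1 (∑ i ∈ T, z i) := by
      simp only [hfdef]
      have hR : β ⬝ᵥ (xs.2 + ∑ T ∈ Fam, (xs.1 T - vecMulVec (c T) (c T))).mulVec β
          = β ⬝ᵥ xs.2.mulVec β := by
        rw [quad_add, quad_sum]
        have : ∀ T ∈ Fam, β ⬝ᵥ (xs.1 T - vecMulVec (c T) (c T)).mulVec β = 0 := by
          intro T _
          rw [quad_sub, hc2 T, sub_self]
        rw [Finset.sum_eq_zero this, add_zero]
      rw [hR]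
      congr 1
      exact Finset.sum_congr rfl fun T _ => by rw [hc2 T]
    rw [heq1] at hle
    rw [heq2] at hle
    exact hle
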